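/- arXiv:1910.02546 — 4 statements merged into one kernel-verified Lean document; each statement's English description precedes it below -/
import Mathlib

section
/- Let A, B be symmetric m×m matrices with B positive definite, G a d×m full-row-rank matrix with GAG' invertible. If G is a critical point of G ↦ log det(GAG') - log det(GBG') (i.e., the directional derivative vanishes in every direction η ∈ Mat(d,m)), then GA = γ·GB where γ = (GAG')(GBG')^{-1}. -/
open Matrix

lemma trace_mul_transpose_stdBasis {d m : ℕ} (X : Matrix (Fin d) (Fin m) ℝ)
    (i : Fin d) (j : Fin m) :
    (X * (Matrix.single i j (1:ℝ))ᵀ).trace = X i j := by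
  simp only [Matrix.trace, Matrix.diag, Matrix.mul_apply, Matrix.transpose_apply]
  rw [Finset.sum_eq_single i]
  · rw [Finset.sum_eq_single j] <;>
      simp +contextual [Matrix.single, eq_comm]
  · intro b _ hb
    apply Finset.sum_eq_zero
    intro l _
    simp [Matrix.single, Ne.symm hb]
  · simp

/-- At a critical point of `G ↦ log det(GAG') - log det(GBG')` (vanishing directional
derivative in every direction `η`), we have `GA = γ·GB` with `γ = (GAG')(GBG')⁻¹`. -/
theorem stmt6 (m d : ℕ) (A B : Matrix (Fin m) (Fin m) ℝ)
    (hA : A.IsSymm) (hBsymm : B.IsSymm) (hB : B.PosDef)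
    (G : Matrix (Fin d) (Fin m) ℝ) (hG : G.rank = d)
    (hGA : IsUnit (G * A * Gᵀ))
    (hcrit : ∀ η : Matrix (Fin d) (Fin m) ℝ,
      ((G * A * Gᵀ)⁻¹ * (G * A * ηᵀ)).trace
        = ((G * B * Gᵀ)⁻¹ * (G * B * ηᵀ)).trace) :
    G * A = (G * A * Gᵀ) * (G * B * Gᵀ)⁻¹ * (G * B) := by
  have hPQ : (G * A * Gᵀ)⁻¹ * (G * A) = (G * B * Gᵀ)⁻¹ * (G * B) := by
    ext i j
    have h := hcrit (Matrix.single i j 1)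
    have e1 : (G * A * Gᵀ)⁻¹ * (G * A * (Matrix.single i j (1:ℝ))ᵀ)
        = ((G * A * Gᵀ)⁻¹ * (G * A)) * (Matrix.single i j (1:ℝ))ᵀ :=
      (Matrix.mul_assoc _ _ _).symm
    have e2 : (G * B * Gᵀ)⁻¹ * (G * B * (Matrix.single i j (1:ℝ))ᵀ)
        = ((G * B * Gᵀ)⁻¹ * (G * B)) * (Matrix.single i j (1:ℝ))ᵀ :=
      (Matrix.mul_assoc _ _ _).symm
    rw [e1, e2, trace_mul_transpose_stdBasis, trace_mul_transpose_stdBasis] at h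
    exact h
  calc G * A = (G * A * Gᵀ) * ((G * A * Gᵀ)⁻¹ * (G * A)) := by
        rw [← Matrix.mul_assoc, Matrix.mul_nonsing_inv _ (isUnit_iff_isUnit_det _ |>.mp hGA),
          Matrix.one_mul]
    _ = (G * A * Gᵀ) * (G * B * Gᵀ)⁻¹ * (G * B) := by
        rw [hPQ]; simp only [Matrix.mul_assoc]
end

section
/- Let F = ⊕_{r} K(r, d_r) be a nilpotent Jordan matrix and G an n×m matrix partitioned into blocks G_{r,j} (r the exponent, 0 ≤ j ≤ r-1, block G_{r,j} of size d_r × m) conformally with F. Define κ(G) as the block matrix with row blocks indexed by (r,l) (0 ≤ l ≤ r-1) and p column blocks, with κ(G)_{(r,l),i} = G_{r, r-l-i} if i ≤ r-l and 0 otherwise. If the stacked matrix G_{:,0} (rows of all blocks G_{r,0}) has full row rank, then κ(G) has full row rank. -/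
open Matrix

/-- If the stacked matrix `G_{:,0}` (the blocks `G_{r,0}` for all exponents `r`) has full
row rank, then `κ(G)` has full row rank. Here `r : Fin p` encodes the exponent `r+1`,
`i : Fin p` encodes the lag `i+1`, and `κ(G)_{(r,l),i} = G_{r, r-l-i}` when `i ≤ r-l`. -/
theorem stmt11 (p m : ℕ) (d : Fin p → ℕ)
    (G : ∀ r : Fin p, Fin ((r : ℕ) + 1) → Matrix (Fin (d r)) (Fin m) ℝ)
    (κ : Matrix (Σ r : Fin p, Fin ((r : ℕ) + 1) × Fin (d r)) (Fin p × Fin m) ℝ)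
    (hκ : ∀ (r : Fin p) (l : Fin ((r : ℕ) + 1)) (a : Fin (d r)) (i : Fin p) (c : Fin m),
      κ ⟨r, (l, a)⟩ (i, c) =
        if hle : (i : ℕ) + (l : ℕ) ≤ (r : ℕ) then
          G r ⟨(r : ℕ) - (l : ℕ) - (i : ℕ), by omega⟩ a c
        else 0)
    (stack : Matrix (Σ r : Fin p, Fin (d r)) (Fin m) ℝ)
    (hstack : ∀ (r : Fin p) (a : Fin (d r)) (c : Fin m),
      stack ⟨r, a⟩ c = G r 0 a c)
    (hrank : stack.rank = Fintype.card (Σ r : Fin p, Fin (d r))) :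
    κ.rank = Fintype.card (Σ r : Fin p, Fin ((r : ℕ) + 1) × Fin (d r)) := by
  classical
  have hstackLI : LinearIndependent ℝ (fun y => stack y) := by
    rw [linearIndependent_iff_card_eq_finrank_span, Set.finrank]
    have := Matrix.rank_eq_finrank_span_row stack
    exact hrank.symm.trans this
  apply LinearIndependent.rank_matrix
  rw [Fintype.linearIndependent_iff]
  intro g hg x
  have hcol : ∀ (i : Fin p) (c : Fin m),
      ∑ x : (Σ r : Fin p, Fin ((r : ℕ) + 1) × Fin (d r)), g x * κ x (i, c) = 0 := by
    intro i c
    have := congrFun hg (i, c)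
    simpa [Finset.sum_apply] using this
  have key : ∀ j : ℕ, ∀ (r : Fin p) (l : Fin ((r : ℕ) + 1)) (a : Fin (d r)),
      p - j ≤ (r : ℕ) - (l : ℕ) → g ⟨r, (l, a)⟩ = 0 := by
    intro j
    induction j with
    | zero =>
      intro r l a h
      have := r.isLt
      omega
    | succ j ih =>
      intro r l a hrl
      by_cases hcase : p - j ≤ (r : ℕ) - (l : ℕ)
      · exact ih r l a hcase
      have hrp := r.isLt
      have hlr : (l : ℕ) < (r : ℕ) + 1 := l.isLt
      have hj : j < p := by omega
      set i : ℕ := p - 1 - j with hi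
      have hip : i < p := by omega
      have hrli : (r : ℕ) - (l : ℕ) = i := by omega
      set iF : Fin p := ⟨i, hip⟩ with hiF
      set h : (Σ r' : Fin p, Fin (d r')) → ℝ := fun y =>
        if h' : i ≤ (y.1 : ℕ) then g ⟨y.1, (⟨(y.1 : ℕ) - i, by omega⟩, y.2)⟩ else 0
        with hh
      have hsum : ∑ y : (Σ r' : Fin p, Fin (d r')), h y • stack y = 0 := by
        funext c
        simp only [Finset.sum_apply, Pi.smul_apply, smul_eq_mul, Pi.zero_apply]
        have hLHS := hcol iF c
        rw [← Finset.univ_sigma_univ, Finset.sum_sigma] at hLHS ⊢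
        rw [← hLHS]
        apply Finset.sum_congr rfl
        intro r' _
        rw [Fintype.sum_prod_type]
        by_cases hir : i ≤ (r' : ℕ)
        · have hl0 : (r' : ℕ) - i < (r' : ℕ) + 1 := by omega
          set l₀ : Fin ((r' : ℕ) + 1) := ⟨(r' : ℕ) - i, hl0⟩ with hl₀
          rw [Finset.sum_eq_single l₀]
          · apply Finset.sum_congr rfl
            intro a' _
            have hle : (iF : ℕ) + (l₀ : ℕ) ≤ (r' : ℕ) := by
              simp only [hiF, hl₀]; omega
            rw [hκ, dif_pos hle]
            simp only [hh]
            rw [dif_pos hir, hstack]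
            have h0 : (⟨(r' : ℕ) - (l₀ : ℕ) - (iF : ℕ), by omega⟩ :
                Fin ((r' : ℕ) + 1)) = 0 := by
              ext
              simp only [hiF, hl₀, Fin.val_zero]
              omega
            have hind : (⟨(r' : ℕ) - i, by omega⟩ : Fin ((r' : ℕ) + 1)) = l₀ := rfl
            rw [h0, hind]
          · intro l' _ hne
            by_cases hle : (iF : ℕ) + (l' : ℕ) ≤ (r' : ℕ)
            · have hlt : (l' : ℕ) < (r' : ℕ) - i := by
                have : (l' : ℕ) ≠ (r' : ℕ) - i := fun hc => hne (by ext; exact hc)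
                simp only [hiF] at hle
                omega
              apply Finset.sum_eq_zero
              intro a' _
              have : g ⟨r', (l', a')⟩ = 0 := by
                apply ih
                simp only [hiF] at hle ⊢
                omega
              rw [this, zero_mul]
            · apply Finset.sum_eq_zero
              intro a' _
              rw [hκ, dif_neg hle, mul_zero]
          · intro habs
            exact absurd (Finset.mem_univ l₀) habs
        · have h1 : ∑ y : Fin (d r'), h ⟨r', y⟩ * stack ⟨r', y⟩ c = 0 := by
            apply Finset.sum_eq_zero
            intro a' _
            simp only [hh]
            rw [dif_neg hir, zero_mul]
          have h2 : ∑ l' : Fin ((r' : ℕ) + 1), ∑ a' : Fin (d r'),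
              g ⟨r', (l', a')⟩ * κ ⟨r', (l', a')⟩ (iF, c) = 0 := by
            apply Finset.sum_eq_zero
            intro l' _
            apply Finset.sum_eq_zero
            intro a' _
            have hle : ¬ ((iF : ℕ) + (l' : ℕ) ≤ (r' : ℕ)) := by
              simp only [hiF]; omega
            rw [hκ, dif_neg hle, mul_zero]
          rw [h1, h2]
      have hz := Fintype.linearIndependent_iff.mp hstackLI h hsum ⟨r, a⟩
      simp only [hh] at hz
      rw [dif_pos (by omega : i ≤ (r : ℕ))] at hz
      have hl : (⟨(r : ℕ) - i, by omega⟩ : Fin ((r : ℕ) + 1)) = l := by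
        ext; simp only []; omega
      rwa [hl] at hz
  obtain ⟨r, l, a⟩ := x
  exact key p r l a (by omega)
end

section
/- Let G be an n×m real matrix partitioned into blocks G_{r,j} conformally with a nilpotent Jordan matrix F = ⊕ K(r, d_r), such that the stacked block G_{:,0} has full row rank 𝔩 = Σ d_r ≤ m. Then there exists an invertible matrix S commuting with F such that G° = SG satisfies G°_{:,0}·(G°_{:,0})' = I_𝔩. -/
open Matrix

namespace Stmt17Aux

variable {p : ℕ} {d : Fin p → ℕ}

abbrev Idx (p : ℕ) (d : Fin p → ℕ) := Σ r : Fin p, Fin ((r : ℕ) + 1) × Fin (d r)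
abbrev BIdx (p : ℕ) (d : Fin p → ℕ) := Σ r : Fin p, Fin (d r)

def emb (L : Matrix (BIdx p d) (BIdx p d) ℝ) : Matrix (Idx p d) (Idx p d) ℝ :=
  fun a c => if (a.1 : ℕ) - (a.2.1 : ℕ) = (c.1 : ℕ) - (c.2.1 : ℕ) then
    L ⟨a.1, a.2.2⟩ ⟨c.1, c.2.2⟩ else 0

def Tri (L : Matrix (BIdx p d) (BIdx p d) ℝ) : Prop :=
  ∀ x y : BIdx p d, (y.1 : ℕ) < (x.1 : ℕ) → L x y = 0

lemma inner_sum (n u : ℕ) (g : Fin (n+1) → ℝ) :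
    (∑ i : Fin (n+1), if n - (i : ℕ) = u then g i else 0) =
      if h : u ≤ n then g ⟨n - u, by omega⟩ else 0 := by
  by_cases h : u ≤ n
  · rw [dif_pos h]
    rw [Finset.sum_eq_single (⟨n - u, by omega⟩ : Fin (n+1))]
    · rw [if_pos (by simp only []; omega)]
    · intro b _ hb
      rw [if_neg]
      intro hc
      apply hb
      have := b.isLt
      apply Fin.ext
      simp only [Fin.val_mk]
      omega
    · intro h; exact absurd (Finset.mem_univ _) h
  · rw [dif_neg h]
    apply Finset.sum_eq_zero
    intro i _
    rw [if_neg]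
    omega


lemma emb_mul (L1 L2 : Matrix (BIdx p d) (BIdx p d) ℝ) (h1 : Tri L1) :
    emb L1 * emb L2 = emb (L1 * L2) := by
  ext a c
  rw [mul_apply]
  rw [show (Finset.univ : Finset (Idx p d)) = Finset.univ.sigma (fun _ => Finset.univ) by rfl]
  rw [Finset.sum_sigma]
  set u := (a.1 : ℕ) - (a.2.1 : ℕ) with hu
  set v := (c.1 : ℕ) - (c.2.1 : ℕ) with hv
  have hua : u ≤ (a.1 : ℕ) := Nat.sub_le _ _
  calc ∑ r'' : Fin p, ∑ q : Fin ((r'' : ℕ)+1) × Fin (d r''),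
        emb L1 a ⟨r'', q⟩ * emb L2 ⟨r'', q⟩ c
      = ∑ r'' : Fin p, ∑ i : Fin ((r'' : ℕ)+1),
          if (r'' : ℕ) - (i : ℕ) = u then
            (if u = v then
              ∑ k : Fin (d r''), L1 ⟨a.1, a.2.2⟩ ⟨r'', k⟩ * L2 ⟨r'', k⟩ ⟨c.1, c.2.2⟩ else 0)
          else 0 := by
        refine Finset.sum_congr rfl fun r'' _ => ?_
        rw [Fintype.sum_prod_type]
        refine Finset.sum_congr rfl fun i _ => ?_
        by_cases hd : (r'' : ℕ) - (i : ℕ) = u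
        · rw [if_pos hd]
          by_cases huv : u = v
          · rw [if_pos huv]
            refine Finset.sum_congr rfl fun k _ => ?_
            simp only [emb]
            rw [if_pos (by omega), if_pos (by omega)]
          · rw [if_neg huv]
            apply Finset.sum_eq_zero
            intro k _
            have : emb L2 ⟨r'', (i, k)⟩ c = 0 := by
              simp only [emb]; rw [if_neg (by omega)]
            rw [this, mul_zero]
        · rw [if_neg hd]
          apply Finset.sum_eq_zero
          intro k _
          have : emb L1 a ⟨r'', (i, k)⟩ = 0 := by
            simp only [emb]; rw [if_neg (by omega)]
          rw [this, zero_mul]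
    _ = ∑ r'' : Fin p,
          (if u = v then
            ∑ k : Fin (d r''), L1 ⟨a.1, a.2.2⟩ ⟨r'', k⟩ * L2 ⟨r'', k⟩ ⟨c.1, c.2.2⟩ else 0) := by
        refine Finset.sum_congr rfl fun r'' _ => ?_
        rw [inner_sum]
        by_cases h : u ≤ (r'' : ℕ)
        · rw [dif_pos h]
        · rw [dif_neg h]
          by_cases huv : u = v
          · rw [if_pos huv]
            symm
            apply Finset.sum_eq_zero
            intro k _
            rw [h1 ⟨a.1, a.2.2⟩ ⟨r'', k⟩ (by simp only []; omega)]
            ring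
          · rw [if_neg huv]
    _ = emb (L1 * L2) a c := by
        rw [emb]
        by_cases huv : u = v
        · simp only [if_pos huv, ← hu, ← hv]
          rw [mul_apply]
          rw [show (Finset.univ : Finset (BIdx p d)) = Finset.univ.sigma (fun _ => Finset.univ) by rfl]
          rw [Finset.sum_sigma]
        · simp only [if_neg huv, ← hu, ← hv, Finset.sum_const_zero]


lemma emb_one : emb (1 : Matrix (BIdx p d) (BIdx p d) ℝ) = 1 := by
  ext a c
  obtain ⟨r, i, k⟩ := a
  obtain ⟨r', i', k'⟩ := c
  simp only [emb, one_apply]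
  by_cases hr : r = r'
  · subst hr
    have hi := i.isLt
    have hi' := i'.isLt
    have hpair : (⟨r, (i, k)⟩ : Idx p d) = ⟨r, (i', k')⟩ → (i, k) = (i', k') :=
      fun h => eq_of_heq (Sigma.mk.inj_iff.mp h).2
    by_cases hii : i = i'
    · subst hii
      rw [if_pos rfl]
      by_cases hkk : k = k'
      · subst hkk
        rw [if_pos rfl, if_pos rfl]
      · rw [if_neg (fun (h : (⟨r, k⟩ : BIdx p d) = ⟨r, k'⟩) => hkk (eq_of_heq (Sigma.mk.inj_iff.mp h).2)),
          if_neg (fun h => hkk (congrArg Prod.snd (hpair h)))]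
    · rw [if_neg (fun h => hii (Fin.ext (by omega))),
        if_neg (fun h => hii (congrArg Prod.fst (hpair h)))]
  · rw [if_neg (fun h => hr (congrArg Sigma.fst h))]
    by_cases hd : (r : ℕ) - (i : ℕ) = (r' : ℕ) - (i' : ℕ)
    · rw [if_pos hd, if_neg (fun h => hr (congrArg Sigma.fst h))]
    · rw [if_neg hd, if_neg (fun h => hr (congrArg Sigma.fst h))]

section F
variable (F : Matrix (Idx p d) (Idx p d) ℝ)
  (hF : ∀ a b : Idx p d,
      F a b = if h : a.1 = b.1 then
          (if (a.2.1 : ℕ) + 1 = (b.2.1 : ℕ) ∧ (a.2.2 : ℕ) = (b.2.2 : ℕ) then 1 else 0)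
        else 0)

include hF

lemma mulF (M : Matrix (Idx p d) (Idx p d) ℝ) (a c : Idx p d) :
    (M * F) a c = if 1 ≤ (c.2.1 : ℕ) then
      M a ⟨c.1, (⟨(c.2.1 : ℕ) - 1, lt_of_le_of_lt (Nat.sub_le _ _) c.2.1.isLt⟩, c.2.2)⟩
    else 0 := by
  obtain ⟨r', i', k'⟩ := c
  rw [mul_apply]
  by_cases h : 1 ≤ (i' : ℕ)
  · rw [if_pos h]
    rw [Finset.sum_eq_single
      (⟨r', (⟨(i' : ℕ) - 1, lt_of_le_of_lt (Nat.sub_le _ _) i'.isLt⟩, k')⟩ : Idx p d)]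
    · rw [hF, dif_pos rfl,
        if_pos (⟨(by omega : (i' : ℕ) - 1 + 1 = (i' : ℕ)), rfl⟩ :
          ((i' : ℕ) - 1 + 1 = (i' : ℕ)) ∧ ((k' : ℕ) = (k' : ℕ))), mul_one]
    · intro b _ hb
      obtain ⟨rb, ib, kb⟩ := b
      rw [hF]
      by_cases hrb : rb = r'
      · subst hrb
        rw [dif_pos rfl, if_neg, mul_zero]
        intro hcond
        have h1 : (ib : ℕ) + 1 = (i' : ℕ) := hcond.1
        have h2 : (kb : ℕ) = (k' : ℕ) := hcond.2
        apply hb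
        exact congrArg (fun q : Fin ((rb : ℕ) + 1) × Fin (d rb) => (⟨rb, q⟩ : Idx p d))
          (Prod.ext (Fin.ext (show (ib : ℕ) = (i' : ℕ) - 1 by omega)) (Fin.ext h2))
      · rw [dif_neg hrb, mul_zero]
    · intro hh; exact absurd (Finset.mem_univ _) hh
  · rw [if_neg h]
    apply Finset.sum_eq_zero
    intro b _
    rw [hF]
    by_cases hrb : b.1 = r'
    · rw [dif_pos hrb, if_neg, mul_zero]
      intro hcond
      have h1 : (b.2.1 : ℕ) + 1 = (i' : ℕ) := hcond.1
      omega
    · rw [dif_neg hrb, mul_zero]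

lemma Fmul (M : Matrix (Idx p d) (Idx p d) ℝ) (a c : Idx p d) :
    (F * M) a c = if h : (a.2.1 : ℕ) + 1 ≤ (a.1 : ℕ) then
      M ⟨a.1, (⟨(a.2.1 : ℕ) + 1, Nat.succ_lt_succ h⟩, a.2.2)⟩ c
    else 0 := by
  obtain ⟨r, i, k⟩ := a
  rw [mul_apply]
  by_cases h : (i : ℕ) + 1 ≤ (r : ℕ)
  · rw [dif_pos h]
    rw [Finset.sum_eq_single (⟨r, (⟨(i : ℕ) + 1, Nat.succ_lt_succ h⟩, k)⟩ : Idx p d)]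
    · rw [hF, dif_pos rfl,
        if_pos (⟨rfl, rfl⟩ : ((i : ℕ) + 1 = (i : ℕ) + 1) ∧ ((k : ℕ) = (k : ℕ))), one_mul]
    · intro b _ hb
      obtain ⟨rb, ib, kb⟩ := b
      rw [hF]
      by_cases hrb : r = rb
      · subst hrb
        rw [dif_pos rfl, if_neg, zero_mul]
        intro hcond
        have h1 : (i : ℕ) + 1 = (ib : ℕ) := hcond.1
        have h2 : (k : ℕ) = (kb : ℕ) := hcond.2
        apply hb
        exact congrArg (fun q : Fin ((r : ℕ) + 1) × Fin (d r) => (⟨r, q⟩ : Idx p d))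
          (Prod.ext (Fin.ext h1.symm) (Fin.ext h2.symm))
      · rw [dif_neg hrb, zero_mul]
    · intro hh; exact absurd (Finset.mem_univ _) hh
  · rw [dif_neg h]
    apply Finset.sum_eq_zero
    intro b _
    rw [hF]
    by_cases hrb : r = b.1
    · rw [dif_pos hrb, if_neg, zero_mul]
      intro hcond
      have h1 : (i : ℕ) + 1 = (b.2.1 : ℕ) := hcond.1
      have hb2 := b.2.1.isLt
      have hi := i.isLt
      have hr : (b.1 : ℕ) = (r : ℕ) := by rw [← hrb]
      omega
    · rw [dif_neg hrb, zero_mul]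

lemma emb_commF (L : Matrix (BIdx p d) (BIdx p d) ℝ) (hT : Tri L) :
    emb L * F = F * emb L := by
  ext a c
  rw [mulF F hF, Fmul F hF]
  obtain ⟨r, i, k⟩ := a
  obtain ⟨r', i', k'⟩ := c
  have hi := i.isLt
  have hi' := i'.isLt
  simp only [emb, Fin.val_mk]
  split_ifs with h1 h2 h3 h4 h5 <;>
    first
      | rfl
      | (exfalso; omega)
      | (exact hT ⟨r, k⟩ ⟨r', k'⟩ (by omega : (r' : ℕ) < (r : ℕ)))
      | (exact (hT ⟨r, k⟩ ⟨r', k'⟩ (by omega : (r' : ℕ) < (r : ℕ))).symm)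

end F



lemma emb_mul_apply_last {m' : ℕ} (L : Matrix (BIdx p d) (BIdx p d) ℝ)
    (M : Matrix (Idx p d) (Fin m') ℝ) (r : Fin p) (k : Fin (d r)) (c : Fin m') :
    (emb L * M) ⟨r, (Fin.last (r : ℕ), k)⟩ c =
      ∑ x : BIdx p d, L ⟨r, k⟩ x * M ⟨x.1, (Fin.last (x.1 : ℕ), x.2)⟩ c := by
  rw [mul_apply]
  rw [show (Finset.univ : Finset (Idx p d)) = Finset.univ.sigma (fun _ => Finset.univ) by rfl]
  rw [Finset.sum_sigma]
  rw [show (Finset.univ : Finset (BIdx p d)) = Finset.univ.sigma (fun _ => Finset.univ) by rfl]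
  rw [Finset.sum_sigma]
  refine Finset.sum_congr rfl fun r'' _ => ?_
  rw [Fintype.sum_prod_type]
  calc ∑ i : Fin ((r'' : ℕ)+1), ∑ kk : Fin (d r''),
        emb L ⟨r, (Fin.last (r : ℕ), k)⟩ ⟨r'', (i, kk)⟩ * M ⟨r'', (i, kk)⟩ c
      = ∑ i : Fin ((r'' : ℕ)+1), (if (r'' : ℕ) - (i : ℕ) = 0 then
          ∑ kk : Fin (d r''), L ⟨r, k⟩ ⟨r'', kk⟩ * M ⟨r'', (i, kk)⟩ c else 0) := by
        refine Finset.sum_congr rfl fun i _ => ?_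
        by_cases hd : (r'' : ℕ) - (i : ℕ) = 0
        · rw [if_pos hd]
          refine Finset.sum_congr rfl fun kk _ => ?_
          simp only [emb]
          rw [if_pos (by simp only [Fin.val_last]; omega)]
        · rw [if_neg hd]
          apply Finset.sum_eq_zero
          intro kk _
          have : emb L ⟨r, (Fin.last (r : ℕ), k)⟩ ⟨r'', (i, kk)⟩ = 0 := by
            simp only [emb]
            rw [if_neg (by simp only [Fin.val_last]; omega)]
          rw [this, zero_mul]
    _ = ∑ kk : Fin (d r''), L ⟨r, k⟩ ⟨r'', kk⟩ * M ⟨r'', (Fin.last (r'' : ℕ), kk)⟩ c := by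
        rw [inner_sum]
        rw [dif_pos (Nat.zero_le _)]
        refine Finset.sum_congr rfl fun kk _ => ?_
        congr 1


-- generic: conjugation of PosDef by invertible
lemma posdef_conj {n : Type*} [Fintype n] [DecidableEq n] {A P : Matrix n n ℝ}
    (hA : A.PosDef) [Invertible P] : (P * A * Pᴴ).PosDef := by
  refine posDef_iff_dotProduct_mulVec.mpr ⟨by
    have := hA.1
    simp only [IsHermitian, conjTranspose_mul, conjTranspose_conjTranspose, this.eq]
    rw [Matrix.mul_assoc], fun x hx => ?_⟩
  have hy : (Pᴴ *ᵥ x) ≠ 0 := by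
    intro h
    apply hx
    have : Pᴴ⁻¹ *ᵥ (Pᴴ *ᵥ x) = 0 := by rw [h, mulVec_zero]
    rwa [mulVec_mulVec, inv_mul_of_invertible, one_mulVec] at this
  have := hA.dotProduct_mulVec_pos hy
  convert this using 1
  rw [← mulVec_mulVec, ← mulVec_mulVec, dotProduct_mulVec, star_mulVec]
  rfl

-- posdef of B * Bᵀ with full row rank
lemma posdef_self_mul_transpose {n : Type*} [Fintype n] [DecidableEq n] {m : ℕ}
    (B : Matrix n (Fin m) ℝ) (h : B.rank = Fintype.card n) : (B * Bᵀ).PosDef := by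
  refine posDef_iff_dotProduct_mulVec.mpr ?_
  refine ⟨by rw [← conjTranspose_eq_transpose_of_trivial]
             exact (posSemidef_self_mul_conjTranspose B).1, fun x hx => ?_⟩
  have hw : Bᵀ *ᵥ x ≠ 0 := by
    intro hw
    apply hx
    have hker : LinearMap.ker Bᵀ.mulVecLin = ⊥ := by
      rw [← Submodule.finrank_eq_zero (R := ℝ)]
      have h1 := Bᵀ.mulVecLin.finrank_range_add_finrank_ker
      have h2 : Bᵀ.rank = Fintype.card n := by rw [rank_transpose]; exact h
      rw [Matrix.rank] at h2
      have h3 : Module.finrank ℝ (n → ℝ) = Fintype.card n := Module.finrank_fintype_fun_eq_card ℝ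
      omega
    have : x ∈ LinearMap.ker Bᵀ.mulVecLin := by
      show Bᵀ.mulVecLin x = 0
      rw [Matrix.mulVecLin_apply]
      exact hw
    rw [hker] at this
    simpa using this
  have hnn : 0 ≤ (Bᵀ *ᵥ x) ⬝ᵥ (Bᵀ *ᵥ x) :=
    Finset.sum_nonneg fun i _ => mul_self_nonneg _
  have hne : (Bᵀ *ᵥ x) ⬝ᵥ (Bᵀ *ᵥ x) ≠ 0 := fun hc => hw (dotProduct_self_eq_zero.mp hc)
  have key : star x ⬝ᵥ (B * Bᵀ) *ᵥ x = (Bᵀ *ᵥ x) ⬝ᵥ (Bᵀ *ᵥ x) := by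
    rw [star_trivial, ← mulVec_mulVec, dotProduct_mulVec, ← mulVec_transpose]
  rw [key]
  exact lt_of_le_of_ne hnn (Ne.symm hne)

-- posdef of submatrix by equiv
lemma posdef_submatrix_equiv {n m : Type*} [Fintype n] [DecidableEq n] [Fintype m] [DecidableEq m]
    {M : Matrix n n ℝ} (hM : M.PosDef) (f : m ≃ n) : (M.submatrix f f).PosDef := by
  refine posDef_iff_dotProduct_mulVec.mpr ⟨hM.1.submatrix f, fun x hx => ?_⟩
  have hx' : x ∘ f.symm ≠ 0 := by
    intro hc
    apply hx
    ext i
    have := congrFun hc (f i)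
    simpa using this
  have := hM.dotProduct_mulVec_pos hx'
  convert this using 1
  rw [submatrix_mulVec_equiv]
  have : star x ⬝ᵥ ((M *ᵥ (x ∘ f.symm)) ∘ f) = (star (x ∘ f.symm) ∘ f) ⬝ᵥ ((M *ᵥ (x ∘ f.symm)) ∘ f) := by
    congr 1
    ext i
    simp [Function.comp]
  rw [this, comp_equiv_dotProduct_comp_equiv]

lemma exists_L (A : Matrix (BIdx p d) (BIdx p d) ℝ) (hA : A.PosDef) :
    ∃ L : Matrix (BIdx p d) (BIdx p d) ℝ, IsUnit L ∧
      (∀ x y : BIdx p d, (y.1 : ℕ) < (x.1 : ℕ) → L x y = 0) ∧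
      (∀ x y : BIdx p d, (y.1 : ℕ) < (x.1 : ℕ) → L⁻¹ x y = 0) ∧
      L * A * Lᵀ = 1 := by
  classical
  -- order BIdx with blocks reversed
  let fkey : BIdx p d → Lex (ℕ × ℕ) := fun x => toLex (p - (x.1 : ℕ), (x.2 : ℕ))
  have hinj : Function.Injective fkey := by
    intro x y h
    obtain ⟨rx, kx⟩ := x
    obtain ⟨ry, ky⟩ := y
    have h' : (p - (rx : ℕ), (kx : ℕ)) = (p - (ry : ℕ), (ky : ℕ)) := h
    have h1 : p - (rx : ℕ) = p - (ry : ℕ) := congrArg Prod.fst h'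
    have h2 : (kx : ℕ) = (ky : ℕ) := congrArg Prod.snd h'
    have hrx := rx.isLt
    have hry := ry.isLt
    have hr : rx = ry := Fin.ext (by omega)
    subst hr
    exact congrArg (Sigma.mk rx) (Fin.ext h2)
  have hlt : ∀ x y : BIdx p d, (y.1 : ℕ) < (x.1 : ℕ) → fkey x < fkey y := by
    intro x y h
    apply Prod.Lex.lt_iff.mpr
    left
    have := x.1.isLt
    simp only [fkey, ofLex_toLex]
    omega
  set N := Fintype.card (BIdx p d) with hN
  let s : Finset (Lex (ℕ × ℕ)) := Finset.univ.image fkey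
  have hcard : s.card = N := by
    rw [Finset.card_image_of_injective _ hinj, Finset.card_univ]
  let e1 : Fin N ≃o {x // x ∈ s} := s.orderIsoOfFin hcard
  let e2 : BIdx p d ≃ {x // x ∈ s} := Equiv.ofBijective
    (fun x => ⟨fkey x, Finset.mem_image_of_mem _ (Finset.mem_univ x)⟩)
    ⟨fun x y h => hinj (congrArg Subtype.val h), by
      rintro ⟨v, hv⟩
      obtain ⟨z, _, hz⟩ := Finset.mem_image.mp hv
      exact ⟨z, Subtype.ext hz⟩⟩
  let e : BIdx p d ≃ Fin N := e2.trans e1.toEquiv.symm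
  have hemono : ∀ x y : BIdx p d, (y.1 : ℕ) < (x.1 : ℕ) → e x < e y := by
    intro x y h
    have h1 : fkey x < fkey y := hlt x y h
    have h2 : e2 x < e2 y := by
      rw [Subtype.mk_lt_mk] at *
      exact h1
    exact (OrderIso.lt_iff_lt e1.symm).mpr h2
  -- LDL on the transported matrix
  haveI hWF : WellFoundedLT (Fin N) := inferInstance
  letI : DecidableEq (Fin N) := fun a b => LinearOrder.toDecidableEq a b
  let A' : Matrix (Fin N) (Fin N) ℝ := A.submatrix e.symm e.symm
  have hA' : A'.PosDef := posdef_submatrix_equiv hA e.symm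
  have hDiagPD : (LDL.diag hA').PosDef := by
    rw [LDL.diag_eq_lowerInv_conj hA']
    exact posdef_conj hA'
  have hDpos : ∀ i, 0 < LDL.diagEntries hA' i := by
    have h := hDiagPD
    rw [LDL.diag] at h
    exact (Matrix.posDef_diagonal_iff).mp h
  let Dh : Fin N → ℝ := fun i => (Real.sqrt (LDL.diagEntries hA' i))⁻¹
  have hsq : ∀ i, Real.sqrt (LDL.diagEntries hA' i) ≠ 0 := fun i =>
    ne_of_gt (Real.sqrt_pos.mpr (hDpos i))
  let L2 : Matrix (Fin N) (Fin N) ℝ := Matrix.diagonal Dh * LDL.lowerInv hA'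
  have hL2 : L2 * A' * L2ᵀ = 1 := by
    have hconj : LDL.lowerInv hA' * A' * (LDL.lowerInv hA')ᵀ = LDL.diag hA' := by
      rw [← conjTranspose_eq_transpose_of_trivial]
      exact (LDL.diag_eq_lowerInv_conj hA').symm
    have hassoc : L2 * A' * L2ᵀ =
        Matrix.diagonal Dh * (LDL.lowerInv hA' * A' * (LDL.lowerInv hA')ᵀ) *
          Matrix.diagonal Dh := by
      show Matrix.diagonal Dh * LDL.lowerInv hA' * A' *
          (Matrix.diagonal Dh * LDL.lowerInv hA')ᵀ = _
      rw [transpose_mul, diagonal_transpose]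
      simp only [Matrix.mul_assoc]
    rw [hassoc, hconj, LDL.diag]
    ext i j
    rw [Matrix.mul_diagonal, Matrix.diagonal_mul]
    by_cases hij : i = j
    · subst hij
      rw [Matrix.one_apply_eq, Matrix.diagonal_apply_eq]
      show Dh i * LDL.diagEntries hA' i * Dh i = 1
      have h1 : Real.sqrt (LDL.diagEntries hA' i) * Real.sqrt (LDL.diagEntries hA' i)
          = LDL.diagEntries hA' i := Real.mul_self_sqrt (le_of_lt (hDpos i))
      show (Real.sqrt (LDL.diagEntries hA' i))⁻¹ * LDL.diagEntries hA' i *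
        (Real.sqrt (LDL.diagEntries hA' i))⁻¹ = 1
      rw [← h1]
      field_simp
      rw [Real.sqrt_sq (Real.sqrt_nonneg _)]
      exact div_self (pow_ne_zero 2 (hsq i))
    · rw [Matrix.one_apply_ne hij, Matrix.diagonal_apply_ne _ hij, mul_zero, zero_mul]
  -- transport back
  have huInv : IsUnit (LDL.lowerInv hA') :=
    @isUnit_of_invertible _ _ _ (LDL.invertibleLowerInv hA')
  have huD : IsUnit (Matrix.diagonal Dh) := by
    rw [Matrix.isUnit_iff_isUnit_det, Matrix.det_diagonal]
    refine (Finset.prod_ne_zero_iff.mpr fun i _ => ?_).isUnit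
    exact inv_ne_zero (hsq i)
  have huL2 : IsUnit L2 := huD.mul huInv
  refine ⟨L2.submatrix e e, ?_, ?_, ?_, ?_⟩
  · rw [Matrix.isUnit_iff_isUnit_det, Matrix.det_submatrix_equiv_self]
    exact (Matrix.isUnit_iff_isUnit_det L2).mp huL2
  · intro x y h
    show L2 (e x) (e y) = 0
    show (Matrix.diagonal Dh * LDL.lowerInv hA') (e x) (e y) = 0
    rw [Matrix.diagonal_mul, LDL.lowerInv_triangular hA' (hemono x y h), mul_zero]
  · -- triangularity of the inverse
    have htri : ∀ x y : BIdx p d, (y.1 : ℕ) < (x.1 : ℕ) → L2.submatrix e e x y = 0 := by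
      intro x y h
      show (Matrix.diagonal Dh * LDL.lowerInv hA') (e x) (e y) = 0
      rw [Matrix.diagonal_mul, LDL.lowerInv_triangular hA' (hemono x y h), mul_zero]
    have hbt : (L2.submatrix e e).BlockTriangular (fun x : BIdx p d => x.1) := by
      intro i j hij
      exact htri i j hij
    have hu : IsUnit (L2.submatrix e e) := by
      rw [Matrix.isUnit_iff_isUnit_det, Matrix.det_submatrix_equiv_self]
      exact (Matrix.isUnit_iff_isUnit_det L2).mp huL2
    letI := hu.invertible
    have := Matrix.blockTriangular_inv_of_blockTriangular hbt
    intro x y h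
    exact this (show (⟨y.1, y.2⟩ : BIdx p d).1 < (⟨x.1, x.2⟩ : BIdx p d).1 from h)
  · have hAsub : A'.submatrix e e = A := by
      ext x y
      show A (e.symm (e x)) (e.symm (e y)) = A x y
      rw [Equiv.symm_apply_apply, Equiv.symm_apply_apply]
    have htr : (L2.submatrix e e)ᵀ = L2ᵀ.submatrix e e := transpose_submatrix L2 e e
    calc L2.submatrix e e * A * (L2.submatrix e e)ᵀ
        = L2.submatrix e e * A'.submatrix e e * L2ᵀ.submatrix e e := by
          rw [hAsub, htr]
      _ = (L2 * A' * L2ᵀ).submatrix e e := by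
          rw [Matrix.submatrix_mul_equiv, Matrix.submatrix_mul_equiv]
      _ = (1 : Matrix (Fin N) (Fin N) ℝ).submatrix e e := by rw [hL2]
      _ = 1 := Matrix.submatrix_one_equiv e

end Stmt17Aux

/-- Generalized Gram–Schmidt/LQ: if the stacked block `G_{:,0}` (the bottom sub-block of
each Jordan block of `G`, corresponding to `G_{r,0}`) has full row rank `𝔩 = Σ d_r`, then
there is an invertible matrix `S` commuting with `F = ⊕ K(r+1, d_r)` such that
`G° = S G` satisfies `G°_{:,0} (G°_{:,0})' = I_𝔩`. Here `r : Fin p` encodes the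
exponent `r+1`, and within a Jordan block the row sub-blocks are
`G_{r,r-1},...,G_{r,0}` from top to bottom, so `G_{r,0}` is the last sub-block. -/
theorem stmt17 (p m : ℕ) (d : Fin p → ℕ)
    (F : Matrix (Σ r : Fin p, Fin ((r : ℕ) + 1) × Fin (d r))
      (Σ r : Fin p, Fin ((r : ℕ) + 1) × Fin (d r)) ℝ)
    (hF : ∀ a b : Σ r : Fin p, Fin ((r : ℕ) + 1) × Fin (d r),
      F a b = if h : a.1 = b.1 then
          (if (a.2.1 : ℕ) + 1 = (b.2.1 : ℕ) ∧ (a.2.2 : ℕ) = (b.2.2 : ℕ) then 1 else 0)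
        else 0)
    (G : Matrix (Σ r : Fin p, Fin ((r : ℕ) + 1) × Fin (d r)) (Fin m) ℝ)
    (stack : Matrix (Σ r : Fin p, Fin ((r : ℕ) + 1) × Fin (d r)) (Fin m) ℝ →
      Matrix (Σ r : Fin p, Fin (d r)) (Fin m) ℝ)
    (hstackdef : ∀ M (ra : Σ r : Fin p, Fin (d r)) (c : Fin m),
      stack M ra c = M ⟨ra.1, (Fin.last (ra.1 : ℕ), ra.2)⟩ c)
    (hrank : (stack G).rank = Fintype.card (Σ r : Fin p, Fin (d r))) :
    ∃ S : Matrix (Σ r : Fin p, Fin ((r : ℕ) + 1) × Fin (d r))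
        (Σ r : Fin p, Fin ((r : ℕ) + 1) × Fin (d r)) ℝ,
      IsUnit S ∧ S * F = F * S ∧
        stack (S * G) * (stack (S * G))ᵀ = 1 := by
  classical
  have hA : ((stack G) * (stack G)ᵀ).PosDef :=
    Stmt17Aux.posdef_self_mul_transpose (stack G) (by rw [hrank])
  obtain ⟨L, hLu, hLtri, hLinvtri, hLA⟩ := Stmt17Aux.exists_L _ hA
  refine ⟨Stmt17Aux.emb L, ?_, ?_, ?_⟩
  · have hdet : IsUnit L.det := (Matrix.isUnit_iff_isUnit_det L).mp hLu
    have h1 : Stmt17Aux.emb L * Stmt17Aux.emb L⁻¹ = 1 := by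
      rw [Stmt17Aux.emb_mul L L⁻¹ hLtri, Matrix.mul_nonsing_inv _ hdet, Stmt17Aux.emb_one]
    have h2 : Stmt17Aux.emb L⁻¹ * Stmt17Aux.emb L = 1 := by
      rw [Stmt17Aux.emb_mul L⁻¹ L hLinvtri, Matrix.nonsing_inv_mul _ hdet, Stmt17Aux.emb_one]
    exact ⟨⟨Stmt17Aux.emb L, Stmt17Aux.emb L⁻¹, h1, h2⟩, rfl⟩
  · exact Stmt17Aux.emb_commF F hF L hLtri
  · have hstack : stack (Stmt17Aux.emb L * G) = L * stack G := by
      ext x c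
      obtain ⟨r, k⟩ := x
      rw [hstackdef]
      show (Stmt17Aux.emb L * G) ⟨r, (Fin.last (r : ℕ), k)⟩ c = (L * stack G) ⟨r, k⟩ c
      rw [Stmt17Aux.emb_mul_apply_last, Matrix.mul_apply]
      exact Finset.sum_congr rfl fun y _ => by rw [hstackdef]
    rw [hstack, Matrix.transpose_mul]
    calc L * stack G * ((stack G)ᵀ * Lᵀ)
        = L * (stack G * (stack G)ᵀ) * Lᵀ := by simp only [Matrix.mul_assoc]
      _ = 1 := hLA
end

section
/- Let A be symmetric positive semidefinite and B symmetric positive definite, both N×N, and let λ_min, λ_max be the smallest and largest eigenvalues of B^{-1/2}AB^{-1/2}. Then for any n×N matrix M of full row rank n, λ_min^n ≤ det(MAM')/det(MBM') ≤ λ_max^n. -/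
open Matrix

section

open scoped ComplexOrder

/-- The square root of a positive semidefinite matrix, as defined in Mathlib (Dec 2024). -/
noncomputable def Matrix.PosSemidef.sqrt {n 𝕜 : Type*} [Fintype n] [DecidableEq n] [RCLike 𝕜]
    {A : Matrix n n 𝕜} (hA : A.PosSemidef) : Matrix n n 𝕜 :=
  (hA.1.eigenvectorUnitary : Matrix n n 𝕜) * diagonal ((↑) ∘ (√·) ∘ hA.1.eigenvalues) *
    (star hA.1.eigenvectorUnitary : Matrix n n 𝕜)

end

lemma aux_sqrt_psd {N : ℕ} {B : Matrix (Fin N) (Fin N) ℝ} (hB : B.PosSemidef) :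
    (PosSemidef.sqrt hB).PosSemidef := by
  unfold PosSemidef.sqrt
  exact (PosSemidef.diagonal (fun i => by simpa using Real.sqrt_nonneg _)).mul_mul_conjTranspose_same _

lemma aux_sqrt_mul_self {N : ℕ} {B : Matrix (Fin N) (Fin N) ℝ} (hB : B.PosSemidef) :
    PosSemidef.sqrt hB * PosSemidef.sqrt hB = B := by
  have hspec := hB.1.spectral_theorem
  simp only [Unitary.conjStarAlgAut_apply] at hspec
  have hU : star (hB.1.eigenvectorUnitary : Matrix (Fin N) (Fin N) ℝ) * hB.1.eigenvectorUnitary = 1 :=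
    Unitary.star_mul_self_of_mem hB.1.eigenvectorUnitary.2
  have key : ∀ (U D E : Matrix (Fin N) (Fin N) ℝ), star U * U = 1 → D * D = E →
      U * D * star U * (U * D * star U) = U * E * star U := by
    intro U D E hU hDE
    rw [show U * D * star U * (U * D * star U) = U * D * (star U * U) * D * star U by
      simp only [Matrix.mul_assoc], hU, Matrix.mul_one, Matrix.mul_assoc U D D, hDE]
  unfold PosSemidef.sqrt
  conv_rhs => rw [hspec]
  refine key _ _ _ hU ?_
  rw [diagonal_mul_diagonal]
  congr 1
  funext i
  simp [Real.mul_self_sqrt (hB.eigenvalues_nonneg i)]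

lemma aux_smul_one_sub_psd {n : ℕ} (Q : Matrix (Fin n) (Fin n) ℝ) (hQ : Q.IsHermitian) (c : ℝ)
    (hc : ∀ i, hQ.eigenvalues i ≤ c) : (c • (1 : Matrix (Fin n) (Fin n) ℝ) - Q).PosSemidef := by
  have hspec := hQ.spectral_theorem
  set U := (hQ.eigenvectorUnitary : Matrix (Fin n) (Fin n) ℝ) with hUdef
  have hU : U * Uᴴ = 1 := by
    rw [← Matrix.star_eq_conjTranspose]
    exact (Matrix.mem_unitaryGroup_iff).mp hQ.eigenvectorUnitary.2
  simp only [Unitary.conjStarAlgAut_apply, RCLike.ofReal_real_eq_id, Function.id_comp, Matrix.star_eq_conjTranspose] at hspec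
  have key : c • (1 : Matrix (Fin n) (Fin n) ℝ) - Q
      = U * (diagonal (fun i => c - hQ.eigenvalues i)) * Uᴴ := by
    have h1 : diagonal (fun i => c - hQ.eigenvalues i)
        = c • (1 : Matrix (Fin n) (Fin n) ℝ) - diagonal hQ.eigenvalues := by
      rw [smul_one_eq_diagonal, ← diagonal_sub]
    rw [h1, Matrix.mul_sub, Matrix.sub_mul, ← hspec, Matrix.mul_smul, Matrix.smul_mul,
      Matrix.mul_one, hU]
  rw [key]
  exact (PosSemidef.diagonal (fun i => by simpa using hc i)).mul_mul_conjTranspose_same U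

lemma aux_sub_smul_one_psd {n : ℕ} (Q : Matrix (Fin n) (Fin n) ℝ) (hQ : Q.IsHermitian) (c : ℝ)
    (hc : ∀ i, c ≤ hQ.eigenvalues i) : (Q - c • (1 : Matrix (Fin n) (Fin n) ℝ)).PosSemidef := by
  have hspec := hQ.spectral_theorem
  set U := (hQ.eigenvectorUnitary : Matrix (Fin n) (Fin n) ℝ) with hUdef
  have hU : U * Uᴴ = 1 := by
    rw [← Matrix.star_eq_conjTranspose]
    exact (Matrix.mem_unitaryGroup_iff).mp hQ.eigenvectorUnitary.2
  simp only [Unitary.conjStarAlgAut_apply, RCLike.ofReal_real_eq_id, Function.id_comp, Matrix.star_eq_conjTranspose] at hspec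
  have key : Q - c • (1 : Matrix (Fin n) (Fin n) ℝ)
      = U * (diagonal (fun i => hQ.eigenvalues i - c)) * Uᴴ := by
    have h1 : diagonal (fun i => hQ.eigenvalues i - c)
        = diagonal hQ.eigenvalues - c • (1 : Matrix (Fin n) (Fin n) ℝ) := by
      rw [smul_one_eq_diagonal, ← diagonal_sub]
    rw [h1, Matrix.mul_sub, Matrix.sub_mul, ← hspec, Matrix.mul_smul, Matrix.smul_mul,
      Matrix.mul_one, hU]
  rw [key]
  exact (PosSemidef.diagonal (fun i => by simpa using hc i)).mul_mul_conjTranspose_same U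

/-- Boundedness of the generalized Rayleigh quotient: if `λ_min`, `λ_max` are the
smallest and largest eigenvalues of `B^{-1/2} A B^{-1/2}`, then for any full-row-rank
`M`, `λ_min^n ≤ det(MAM')/det(MBM') ≤ λ_max^n`. -/
theorem stmt18 (N n : ℕ) (A B : Matrix (Fin N) (Fin N) ℝ)
    (hA : A.PosSemidef) (hB : B.PosDef)
    (C : Matrix (Fin N) (Fin N) ℝ)
    (hC : C = (PosSemidef.sqrt hB.posSemidef)⁻¹ * A * (PosSemidef.sqrt hB.posSemidef)⁻¹)
    (hCh : C.IsHermitian)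
    (lmin lmax : ℝ)
    (hmin : IsLeast (Set.range hCh.eigenvalues) lmin)
    (hmax : IsGreatest (Set.range hCh.eigenvalues) lmax)
    (M : Matrix (Fin n) (Fin N) ℝ) (hM : M.rank = n) :
    lmin ^ n ≤ (M * A * Mᵀ).det / (M * B * Mᵀ).det ∧
      (M * A * Mᵀ).det / (M * B * Mᵀ).det ≤ lmax ^ n := by
  set S := PosSemidef.sqrt hB.posSemidef with hSdef
  have hSps : S.PosSemidef := aux_sqrt_psd hB.posSemidef
  have hSherm : Sᴴ = S := hSps.1
  have hSsymm : Sᵀ = S := by rw [← conjTranspose_eq_transpose_of_trivial, hSherm]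
  have hSS : S * S = B := aux_sqrt_mul_self hB.posSemidef
  have hdetS : S.det ≠ 0 := by
    intro h
    apply hB.det_pos.ne'
    rw [← hSS, det_mul, h, zero_mul]
  have hSunit : IsUnit S.det := hdetS.isUnit
  have h1S : S * S⁻¹ = 1 := mul_nonsing_inv S hSunit
  have h2S : S⁻¹ * S = 1 := nonsing_inv_mul S hSunit
  -- A = S * C * S
  have hACS : A = S * C * S := by
    rw [hC]
    simp only [← Matrix.mul_assoc]
    rw [h1S, Matrix.one_mul, Matrix.mul_assoc A, h2S, Matrix.mul_one]
  -- C is positive semidefinite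
  have hSinvH : S⁻¹ᴴ = S⁻¹ := by rw [Matrix.conjTranspose_nonsing_inv, hSherm]
  have hCpsd : C.PosSemidef := by
    have := hA.mul_mul_conjTranspose_same S⁻¹
    rwa [hSinvH, ← hC] at this
  have hlmin0 : 0 ≤ lmin := by
    obtain ⟨i, hi⟩ := hmin.1
    exact hi ▸ hCpsd.eigenvalues_nonneg i
  -- Loewner bounds on C
  have hCub : (lmax • (1 : Matrix (Fin N) (Fin N) ℝ) - C).PosSemidef :=
    aux_smul_one_sub_psd C hCh lmax (fun i => hmax.2 ⟨i, rfl⟩)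
  have hClb : (C - lmin • (1 : Matrix (Fin N) (Fin N) ℝ)).PosSemidef :=
    aux_sub_smul_one_psd C hCh lmin (fun i => hmin.2 ⟨i, rfl⟩)
  -- K and D
  set K := M * S with hK
  have hKrank : K.rank = n := by
    rw [hK, rank_mul_eq_left_of_isUnit_det S M hSunit, hM]
  set D := K * Kᵀ with hD
  have hDpsd : D.PosSemidef := by
    have := posSemidef_self_mul_conjTranspose K
    rwa [conjTranspose_eq_transpose_of_trivial] at this
  have hDrank : D.rank = n := by rw [hD, rank_self_mul_transpose, hKrank]
  have hDdet : D.det ≠ 0 := by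
    have hall : ∀ i, hDpsd.1.eigenvalues i ≠ 0 := by
      intro j hj
      have hcard := hDpsd.1.rank_eq_card_non_zero_eigs
      rw [hDrank] at hcard
      have hlt : Fintype.card {i // hDpsd.1.eigenvalues i ≠ 0} < Fintype.card (Fin n) :=
        Fintype.card_subtype_lt (x := j) (by simp [hj])
      rw [Fintype.card_fin, ← hcard] at hlt
      exact lt_irrefl _ hlt
    have hdet : D.det = ∏ i, hDpsd.1.eigenvalues i := by
      simpa using hDpsd.1.det_eq_prod_eigenvalues
    rw [hdet]
    exact Finset.prod_ne_zero_iff.mpr (fun i _ => hall i)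
  set T := PosSemidef.sqrt hDpsd with hTdef
  have hTps : T.PosSemidef := aux_sqrt_psd hDpsd
  have hTherm : Tᴴ = T := hTps.1
  have hTsymm : Tᵀ = T := by rw [← conjTranspose_eq_transpose_of_trivial, hTherm]
  have hTT : T * T = D := aux_sqrt_mul_self hDpsd
  have hdetT : T.det ≠ 0 := by
    intro h
    apply hDdet
    rw [← hTT, det_mul, h, zero_mul]
  have hTunit : IsUnit T.det := hdetT.isUnit
  have h1T : T * T⁻¹ = 1 := mul_nonsing_inv T hTunit
  have h2T : T⁻¹ * T = 1 := nonsing_inv_mul T hTunit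
  have hdetDpos : 0 < D.det := by
    rw [← hTT, det_mul]
    exact mul_self_pos.mpr hdetT
  set L := T⁻¹ * K with hL
  have hLT : Lᵀ = Kᵀ * T⁻¹ := by
    rw [hL, transpose_mul, transpose_nonsing_inv, hTsymm]
  have hLLT : L * Lᵀ = 1 := by
    rw [hL, hLT]
    calc T⁻¹ * K * (Kᵀ * T⁻¹) = T⁻¹ * (K * Kᵀ) * T⁻¹ := by
          simp only [Matrix.mul_assoc]
      _ = T⁻¹ * (T * T) * T⁻¹ := by rw [← hD, ← hTT]
      _ = 1 := by
          simp only [← Matrix.mul_assoc]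
          rw [h2T, Matrix.one_mul, h1T]
  set G := L * C * Lᵀ with hG
  have hGpsd : G.PosSemidef := by
    have := hCpsd.mul_mul_conjTranspose_same L
    rwa [conjTranspose_eq_transpose_of_trivial] at this
  have hGherm : G.IsHermitian := hGpsd.1
  -- det identity
  have hKCKT : K * C * Kᵀ = T * G * T := by
    rw [hG, hL, hLT]
    refine Eq.symm ?_
    calc T * (T⁻¹ * K * C * (Kᵀ * T⁻¹)) * T
        = (T * T⁻¹) * (K * C * Kᵀ) * (T⁻¹ * T) := by simp only [Matrix.mul_assoc]
      _ = K * C * Kᵀ := by rw [h1T, h2T, Matrix.one_mul, Matrix.mul_one]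
  have hdetKCK : (K * C * Kᵀ).det = D.det * G.det := by
    rw [hKCKT, det_mul, det_mul, ← hTT, det_mul]
    ring
  -- eigenvalues of G are in [lmin, lmax]
  have hGev : ∀ i, lmin ≤ hGherm.eigenvalues i ∧ hGherm.eigenvalues i ≤ lmax := by
    intro i
    have hev := hGherm.eigenvalues_eq i
    set v : Fin n → ℝ := ⇑(hGherm.eigenvectorBasis i) with hv
    have hvnorm : v ⬝ᵥ v = 1 := by
      have h1 : ‖hGherm.eigenvectorBasis i‖ = 1 := hGherm.eigenvectorBasis.orthonormal.1 i
      have h2 : (inner ℝ (hGherm.eigenvectorBasis i) (hGherm.eigenvectorBasis i) : ℝ) = 1 := by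
        rw [real_inner_self_eq_norm_sq, h1]; norm_num
      rw [EuclideanSpace.inner_eq_star_dotProduct] at h2
      simpa using h2
    set w : Fin N → ℝ := Lᵀ *ᵥ v with hw
    have hq : hGherm.eigenvalues i = w ⬝ᵥ (C *ᵥ w) := by
      rw [hev]
      simp only [RCLike.re_to_real, star_trivial]
      rw [hG, ← Matrix.mulVec_mulVec, ← Matrix.mulVec_mulVec, Matrix.dotProduct_mulVec v L,
        ← Matrix.mulVec_transpose]
    have hwnorm : w ⬝ᵥ w = 1 := by
      have : w ⬝ᵥ w = v ⬝ᵥ ((L * Lᵀ) *ᵥ v) := by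
        rw [← Matrix.mulVec_mulVec, hw, Matrix.dotProduct_mulVec v L, ← Matrix.mulVec_transpose]
      rw [this, hLLT, Matrix.one_mulVec, hvnorm]
    constructor
    · have h0 := hClb.dotProduct_mulVec_nonneg w
      simp only [star_trivial, Matrix.sub_mulVec, Matrix.smul_mulVec,
        Matrix.one_mulVec, dotProduct_sub, dotProduct_smul, smul_eq_mul, hwnorm] at h0
      rw [hq]; linarith
    · have h0 := hCub.dotProduct_mulVec_nonneg w
      simp only [star_trivial, Matrix.sub_mulVec, Matrix.smul_mulVec,
        Matrix.one_mulVec, dotProduct_sub, dotProduct_smul, smul_eq_mul, hwnorm] at h0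
      rw [hq]; linarith
  -- det G bounds
  have hGdet : G.det = ∏ i, hGherm.eigenvalues i := by
    simpa using hGherm.det_eq_prod_eigenvalues
  have hGdet_lb : lmin ^ n ≤ G.det := by
    rw [hGdet]
    calc lmin ^ n = ∏ _i : Fin n, lmin := by simp
      _ ≤ ∏ i, hGherm.eigenvalues i :=
          Finset.prod_le_prod (fun i _ => hlmin0) (fun i _ => (hGev i).1)
  have hGdet_ub : G.det ≤ lmax ^ n := by
    rw [hGdet]
    calc (∏ i, hGherm.eigenvalues i) ≤ ∏ _i : Fin n, lmax :=
          Finset.prod_le_prod (fun i _ => le_trans hlmin0 (hGev i).1) (fun i _ => (hGev i).2)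
      _ = lmax ^ n := by simp
  -- rewrite goal
  have hMA : M * A * Mᵀ = K * C * Kᵀ := by
    rw [hACS, hK, transpose_mul, hSsymm]
    simp only [Matrix.mul_assoc]
  have hMB : M * B * Mᵀ = D := by
    rw [← hSS, hD, hK, transpose_mul, hSsymm]
    simp only [Matrix.mul_assoc]
  rw [hMA, hMB, hdetKCK]
  rw [mul_div_cancel_left₀ _ (ne_of_gt hdetDpos)]
  exact ⟨hGdet_lb, hGdet_ub⟩
end
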